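/- The binary image under the Gray map of the Plotkin construction on ℤ₂ℤ₄-additive codes X, Y ⊆ ℤ₂^α × ℤ₄^β is a (not necessarily linear) binary code of length 2α+4β with 2^(γ_X+γ_Y)·4^(δ_X+δ_Y) codewords and minimum Hamming distance min{2d_X, d_Y}, where d_X, d_Y are the minimum Lee distances of X and Y. -/

import Mathlib

open Finset

/-- The Gray map `φ : ℤ₄ → ℤ₂²`. -/
def grayMap (x : ZMod 4) : ZMod 2 × ZMod 2 :=
  if x = 0 then (0, 0) else if x = 1 then (0, 1) else if x = 2 then (1, 1) else (1, 0)

/-- Lee weight on `ℤ₄`: `wL(0)=0, wL(1)=1, wL(2)=2, wL(3)=1`. -/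
def leeWt4 (x : ZMod 4) : ℕ := min x.val (4 - x.val)

/-- Hamming distance on `ℤ₂²`. -/
def hamDist2 (x y : ZMod 2 × ZMod 2) : ℕ :=
  (if x.1 = y.1 then 0 else 1) + (if x.2 = y.2 then 0 else 1)

/-- The ambient space `ℤ₂^a × ℤ₄^b`. -/
abbrev Vec (a b : ℕ) := (Fin a → ZMod 2) × (Fin b → ZMod 4)

/-- Hamming weight of a binary vector. -/
def wtH {n : ℕ} (f : Fin n → ZMod 2) : ℕ := (univ.filter fun i => f i ≠ 0).card

/-- Lee weight on `ℤ₂^a × ℤ₄^b`. -/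
def leeWt {a b : ℕ} (w : Vec a b) : ℕ := wtH w.1 + ∑ j, leeWt4 (w.2 j)

/-- Lee distance on `ℤ₂^a × ℤ₄^b`. -/
def leeDist {a b : ℕ} (x y : Vec a b) : ℕ := leeWt (x - y)

/-- Minimum Lee distance (= minimum Lee weight of a nonzero element) of a set. -/
noncomputable def minLee {a b : ℕ} (S : Set (Vec a b)) : ℕ := sInf (leeWt '' (S \ {0}))

/-- Minimum Hamming distance of a (not necessarily linear) binary code. -/
noncomputable def minHam {n : ℕ} (S : Set (Fin n → ZMod 2)) : ℕ :=
  sInf {d | ∃ x ∈ S, ∃ y ∈ S, x ≠ y ∧ hammingDist x y = d}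

/-- The extended Gray map `Φ : ℤ₂^a × ℤ₄^b → ℤ₂^(a+2b)`. -/
def Phi {a b : ℕ} (x : Vec a b) : Fin (a + 2 * b) → ZMod 2 :=
  fun i =>
    if h : (i : ℕ) < a then x.1 ⟨i, h⟩
    else
      have hb : ((i : ℕ) - a) / 2 < b := by have := i.isLt; omega
      if ((i : ℕ) - a) % 2 = 0 then (grayMap (x.2 ⟨((i : ℕ) - a) / 2, hb⟩)).1
      else (grayMap (x.2 ⟨((i : ℕ) - a) / 2, hb⟩)).2

/-- The Plotkin vector `(u , u + v)` in `ℤ₂^(2a) × ℤ₄^(2b)`. -/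
def plVec {a b : ℕ} (u v : Vec a b) : Vec (a + a) (b + b) :=
  (Fin.append u.1 (u.1 + v.1), Fin.append u.2 (u.2 + v.2))

/-- The Plotkin construction `{(u, u+v) : u ∈ X, v ∈ Y}`. -/
def plotkinSet {a b : ℕ} (X Y : Set (Vec a b)) : Set (Vec (a + a) (b + b)) :=
  {w | ∃ u ∈ X, ∃ v ∈ Y, w = plVec u v}

lemma gray_sub : ∀ c d : ZMod 4,
    ((if (grayMap c).1 ≠ (grayMap d).1 then (1:ℕ) else 0) +
      if (grayMap c).2 ≠ (grayMap d).2 then 1 else 0) = leeWt4 (c - d) := by decide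

lemma leeWt4_zero_iff : ∀ c : ZMod 4, leeWt4 c = 0 ↔ c = 0 := by decide
lemma leeWt4_neg : ∀ c : ZMod 4, leeWt4 (-c) = leeWt4 c := by decide
lemma leeWt4_add_le : ∀ c d : ZMod 4, leeWt4 (c + d) ≤ leeWt4 c + leeWt4 d := by decide

lemma wtH_eq_sum {n} (f : Fin n → ZMod 2) : wtH f = ∑ i, if f i ≠ 0 then 1 else 0 := by
  simp [wtH, Finset.card_filter]

lemma wtH_zero_iff {n} (f : Fin n → ZMod 2) : wtH f = 0 ↔ f = 0 := by
  simp [wtH, Finset.card_eq_zero, Finset.filter_eq_empty_iff, funext_iff]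

lemma wtH_append {a b} (f : Fin a → ZMod 2) (g : Fin b → ZMod 2) :
    wtH (Fin.append f g) = wtH f + wtH g := by
  simp [wtH_eq_sum, Fin.sum_univ_add, Fin.append_left, Fin.append_right]

lemma wtH_add_le {n} (f g : Fin n → ZMod 2) : wtH (f + g) ≤ wtH f + wtH g := by
  simp only [wtH_eq_sum]
  rw [← Finset.sum_add_distrib]
  refine Finset.sum_le_sum fun i _ => ?_
  by_cases hf : f i = 0 <;> by_cases hg : g i = 0 <;> simp [hf, hg] <;> split <;> omega

lemma leeWt_zero {a b : ℕ} : leeWt (0 : Vec a b) = 0 := by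
  simp [leeWt, wtH, leeWt4]

lemma leeWt_zero_iff {a b : ℕ} (w : Vec a b) : leeWt w = 0 ↔ w = 0 := by
  constructor
  · intro h
    rw [leeWt, Nat.add_eq_zero] at h
    obtain ⟨h1, h2⟩ := h
    rw [Finset.sum_eq_zero_iff] at h2
    refine Prod.ext ((wtH_zero_iff _).1 h1) (funext fun j => ?_)
    exact (leeWt4_zero_iff _).1 (h2 j (mem_univ j))
  · rintro rfl; exact leeWt_zero

lemma leeWt_neg {a b : ℕ} (w : Vec a b) : leeWt (-w) = leeWt w := by
  simp [leeWt, wtH, leeWt4_neg, neg_eq_zero]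

lemma leeWt_add_le {a b : ℕ} (x y : Vec a b) : leeWt (x + y) ≤ leeWt x + leeWt y := by
  have h2 : ∑ j, leeWt4 ((x + y).2 j) ≤ (∑ j, leeWt4 (x.2 j)) + ∑ j, leeWt4 (y.2 j) := by
    rw [← Finset.sum_add_distrib]
    exact Finset.sum_le_sum fun j _ => leeWt4_add_le _ _
  have h1 := wtH_add_le x.1 y.1
  simp only [leeWt, Prod.fst_add] at *
  omega

def pairEquiv (b : ℕ) : Fin b × Fin 2 ≃ Fin (2 * b) where
  toFun p := ⟨2 * p.1.val + p.2.val, by omega⟩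
  invFun k := (⟨k.val / 2, by have := k.isLt; omega⟩, ⟨k.val % 2, by omega⟩)
  left_inv := by
    rintro ⟨⟨j, hj⟩, ⟨r, hr⟩⟩
    exact Prod.ext (Fin.ext (show (2 * j + r) / 2 = j by omega))
      (Fin.ext (show (2 * j + r) % 2 = r by omega))
  right_inv := by
    rintro ⟨k, hk⟩
    exact Fin.ext (show 2 * (k / 2) + k % 2 = k by omega)

lemma Phi_castAdd {a b : ℕ} (x : Vec a b) (i : Fin a) :
    Phi x (Fin.castAdd (2 * b) i) = x.1 i := by
  simp [Phi, Fin.castAdd, i.isLt]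

@[simp] lemma pairEquiv_val {b : ℕ} (p : Fin b × Fin 2) :
    ((pairEquiv b p : Fin (2 * b)) : ℕ) = 2 * p.1.val + p.2.val := rfl

lemma Phi_natAdd0 {a b : ℕ} (x : Vec a b) (j : Fin b) :
    Phi x (Fin.natAdd a (pairEquiv b (j, 0))) = (grayMap (x.2 j)).1 := by
  simp only [Phi, Fin.coe_natAdd, pairEquiv_val, Fin.val_zero]
  simp only [show ¬ (a + (2 * (j : ℕ) + 0) < a) by omega, ↓reduceDIte,
    show (a + (2 * (j : ℕ) + 0) - a) % 2 = 0 by omega, ↓reduceIte]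
  have h : (a + (2 * (j : ℕ) + 0) - a) / 2 = (j : ℕ) := by omega
  simp only [h, Fin.eta]

lemma Phi_natAdd1 {a b : ℕ} (x : Vec a b) (j : Fin b) :
    Phi x (Fin.natAdd a (pairEquiv b (j, 1))) = (grayMap (x.2 j)).2 := by
  simp only [Phi, Fin.coe_natAdd, pairEquiv_val, Fin.val_one]
  simp only [show ¬ (a + (2 * (j : ℕ) + 1) < a) by omega, ↓reduceDIte,
    show ¬ ((a + (2 * (j : ℕ) + 1) - a) % 2 = 0) by omega, ↓reduceIte]
  have h : (a + (2 * (j : ℕ) + 1) - a) / 2 = (j : ℕ) := by omega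
  simp only [h, Fin.eta]

lemma hammingDist_Phi {a b : ℕ} (x y : Vec a b) :
    hammingDist (Phi x) (Phi y) = leeWt (x - y) := by
  rw [hammingDist, Finset.card_filter, Fin.sum_univ_add]
  have h1 : (∑ i : Fin a, if Phi x (Fin.castAdd (2*b) i) ≠ Phi y (Fin.castAdd (2*b) i) then 1 else 0)
      = wtH ((x - y).1) := by
    rw [wtH_eq_sum]
    refine Finset.sum_congr rfl fun i _ => ?_
    simp only [Phi_castAdd, Prod.fst_sub, Pi.sub_apply, ne_eq, sub_eq_zero]
  have h2 : (∑ k : Fin (2*b), if Phi x (Fin.natAdd a k) ≠ Phi y (Fin.natAdd a k) then 1 else 0)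
      = ∑ j, leeWt4 ((x - y).2 j) := by
    rw [← Fintype.sum_equiv (pairEquiv b)
      (fun p => if Phi x (Fin.natAdd a (pairEquiv b p)) ≠ Phi y (Fin.natAdd a (pairEquiv b p)) then 1 else 0)
      (fun k => if Phi x (Fin.natAdd a k) ≠ Phi y (Fin.natAdd a k) then 1 else 0)
      (fun p => rfl)]
    rw [Fintype.sum_prod_type]
    refine Finset.sum_congr rfl fun j _ => ?_
    rw [Fin.sum_univ_two]
    rw [Phi_natAdd0, Phi_natAdd0, Phi_natAdd1, Phi_natAdd1, gray_sub]
    simp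
  rw [h1, h2, leeWt]

lemma Phi_injective {a b : ℕ} : Function.Injective (@Phi a b) := by
  intro x y h
  have : hammingDist (Phi x) (Phi y) = 0 := by rw [h, hammingDist_eq_zero]
  rw [hammingDist_Phi, leeWt_zero_iff, sub_eq_zero] at this
  exact this

lemma append_sub {α : Type*} [SubtractionMonoid α] {n m : ℕ} (f f' : Fin n → α)
    (g g' : Fin m → α) :
    Fin.append f g - Fin.append f' g' = Fin.append (f - f') (g - g') := by
  funext i
  simp only [Pi.sub_apply]
  cases i using Fin.addCases with
  | left i => simp [Fin.append_left]
  | right i => simp [Fin.append_right]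

lemma plVec_sub {a b : ℕ} (u v u' v' : Vec a b) :
    plVec u v - plVec u' v' = plVec (u - u') (v - v') := by
  simp only [plVec, Prod.mk_sub_mk, append_sub, Prod.fst_sub, Prod.snd_sub]
  rw [show u.1 + v.1 - (u'.1 + v'.1) = u.1 - u'.1 + (v.1 - v'.1) by abel,
      show u.2 + v.2 - (u'.2 + v'.2) = u.2 - u'.2 + (v.2 - v'.2) by abel]

lemma append_zero' {M : Type*} [Zero M] {n m : ℕ} :
    Fin.append (0 : Fin n → M) (0 : Fin m → M) = 0 := by
  funext i
  cases i using Fin.addCases with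
  | left i => rw [Fin.append_left]; rfl
  | right i => rw [Fin.append_right]; rfl

lemma plVec_zero {a b : ℕ} : plVec (0 : Vec a b) 0 = 0 := by
  simp only [plVec, Prod.fst_zero, Prod.snd_zero, add_zero, append_zero']
  rfl

lemma append_inj {M : Type*} {n m : ℕ} {f f' : Fin n → M} {g g' : Fin m → M}
    (h : Fin.append f g = Fin.append f' g') : f = f' ∧ g = g' := by
  constructor
  · funext i
    have := congrFun h (Fin.castAdd m i)
    rwa [Fin.append_left, Fin.append_left] at this
  · funext i
    have := congrFun h (Fin.natAdd n i)
    rwa [Fin.append_right, Fin.append_right] at this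

lemma plVec_inj {a b : ℕ} {u v u' v' : Vec a b} (h : plVec u v = plVec u' v') :
    u = u' ∧ v = v' := by
  have h1 : (plVec u v).1 = (plVec u' v').1 := by rw [h]
  have h2 : (plVec u v).2 = (plVec u' v').2 := by rw [h]
  obtain ⟨hu1, huv1⟩ := append_inj h1
  obtain ⟨hu2, huv2⟩ := append_inj h2
  have hu : u = u' := Prod.ext hu1 hu2
  subst hu
  have hv1 : v.1 = v'.1 := add_left_cancel huv1
  have hv2 : v.2 = v'.2 := add_left_cancel huv2
  exact ⟨rfl, Prod.ext hv1 hv2⟩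

lemma leeWt_plVec {a b : ℕ} (u v : Vec a b) :
    leeWt (plVec u v) = leeWt u + leeWt (u + v) := by
  simp only [leeWt, plVec, wtH_append, Fin.sum_univ_add, Fin.append_left, Fin.append_right,
    Prod.fst_add, Prod.snd_add, Pi.add_apply]
  ring

lemma plotkin_eq_image {a b : ℕ} (X Y : Set (Vec a b)) :
    plotkinSet X Y = (fun p : Vec a b × Vec a b => plVec p.1 p.2) '' (X ×ˢ Y) := by
  ext w
  constructor
  · rintro ⟨u, hu, v, hv, rfl⟩; exact ⟨(u, v), ⟨hu, hv⟩, rfl⟩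
  · rintro ⟨⟨u, v⟩, ⟨hu, hv⟩, rfl⟩; exact ⟨u, hu, v, hv, rfl⟩

lemma plVec_injective {a b : ℕ} :
    Function.Injective (fun p : Vec a b × Vec a b => plVec p.1 p.2) := by
  rintro ⟨u, v⟩ ⟨u', v'⟩ h
  obtain ⟨h1, h2⟩ := plVec_inj h
  exact Prod.ext h1 h2

/-- the Gray image of the Plotkin construction on codes `X` of type
`(α,β;γX,δX)` and `Y` of type `(α,β;γY,δY)` (both nonzero, with minimum Lee distances
`dX, dY`) is a binary code of length `2α+4β` with `2^(γX+γY)·4^(δX+δY)` codewords and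
minimum Hamming distance `min {2dX, dY}`. -/
theorem gray_image_plotkin (α β γX δX γY δY dX dY : ℕ) (X Y : AddSubgroup (Vec α β))
    (hX : Nonempty (X ≃+ Vec γX δX)) (hY : Nonempty (Y ≃+ Vec γY δY))
    (hXne : X ≠ ⊥) (hYne : Y ≠ ⊥)
    (hdX : minLee (X : Set (Vec α β)) = dX) (hdY : minLee (Y : Set (Vec α β)) = dY) :
    Nat.card (Phi '' plotkinSet (X : Set (Vec α β)) (Y : Set (Vec α β)) :
        Set (Fin ((α + α) + 2 * (β + β)) → ZMod 2)) = 2 ^ (γX + γY) * 4 ^ (δX + δY) ∧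
      minHam (Phi '' plotkinSet (X : Set (Vec α β)) (Y : Set (Vec α β))) = min (2 * dX) dY := by
  -- cardinalities of the subgroups
  have hcard : ∀ (Z : AddSubgroup (Vec α β)) (γ δ : ℕ), (Z ≃+ Vec γ δ) →
      Nat.card (Z : Set (Vec α β)) = 2 ^ γ * 4 ^ δ := by
    intro Z γ δ e
    have h1 : Nat.card (Z : Set (Vec α β)) = Nat.card (Vec γ δ) := Nat.card_congr e.toEquiv
    rw [h1]
    simp [Nat.card_eq_fintype_card]
  constructor
  · rw [Nat.card_image_of_injective Phi_injective, plotkin_eq_image,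
      Nat.card_image_of_injective plVec_injective, Nat.card_congr (Equiv.Set.prod _ _),
      Nat.card_prod, hcard X γX δX hX.some, hcard Y γY δY hY.some, pow_add, pow_add]
    ring
  · set P : Set (Vec (α + α) (β + β)) := plotkinSet ↑X ↑Y with hPdef
    have hzero : (0 : Vec (α + α) (β + β)) ∈ P := ⟨0, X.zero_mem, 0, Y.zero_mem, plVec_zero.symm⟩
    have hsub : ∀ p ∈ P, ∀ q ∈ P, p - q ∈ P := by
      rintro _ ⟨u, hu, v, hv, rfl⟩ _ ⟨u', hu', v', hv', rfl⟩
      exact ⟨u - u', X.sub_mem hu hu', v - v', Y.sub_mem hv hv', plVec_sub u v u' v'⟩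
    have hset : {d | ∃ x ∈ Phi '' P, ∃ y ∈ Phi '' P, x ≠ y ∧ hammingDist x y = d}
        = leeWt '' (P \ {0}) := by
      ext d
      simp only [Set.mem_setOf_eq, Set.mem_image]
      constructor
      · rintro ⟨x, ⟨p, hp, rfl⟩, y, ⟨q, hq, rfl⟩, hne, rfl⟩
        refine ⟨p - q, ⟨hsub p hp q hq, ?_⟩, (hammingDist_Phi p q).symm⟩
        simp only [Set.mem_singleton_iff, sub_eq_zero]
        rintro rfl
        exact hne rfl
      · rintro ⟨w, ⟨hw, hw0⟩, rfl⟩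
        simp only [Set.mem_singleton_iff] at hw0
        refine ⟨Phi w, ⟨w, hw, rfl⟩, Phi 0, ⟨0, hzero, rfl⟩, fun h => hw0 (Phi_injective h), ?_⟩
        rw [hammingDist_Phi, sub_zero]
    have hmin : minHam (Phi '' P) = sInf (leeWt '' (P \ {0})) := by rw [minHam, hset]
    -- minimal-weight witnesses
    have hex : ∀ (Z : AddSubgroup (Vec α β)) (d : ℕ), Z ≠ ⊥ → minLee (Z : Set (Vec α β)) = d →
        ∃ w, w ∈ Z ∧ w ≠ 0 ∧ leeWt w = d := by
      intro Z d hne hd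
      have hZex : ∃ w, w ∈ Z ∧ w ≠ 0 := by
        by_contra h
        push_neg at h
        exact hne ((AddSubgroup.eq_bot_iff_forall Z).mpr h)
      obtain ⟨w0, hw0, hw0ne⟩ := hZex
      have hS : (leeWt '' ((Z : Set (Vec α β)) \ {0})).Nonempty :=
        ⟨leeWt w0, w0, ⟨hw0, by simpa⟩, rfl⟩
      have hmem : minLee (Z : Set (Vec α β)) ∈ leeWt '' ((Z : Set (Vec α β)) \ {0}) :=
        Nat.sInf_mem hS
      rw [hd] at hmem
      obtain ⟨w1, ⟨hw1, hw1ne⟩, hw1w⟩ := hmem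
      exact ⟨w1, hw1, by simpa using hw1ne, hw1w⟩
    obtain ⟨u1, hu1X, hu1ne, hu1w⟩ := hex X dX hXne hdX
    obtain ⟨v1, hv1Y, hv1ne, hv1w⟩ := hex Y dY hYne hdY
    have hlbX : ∀ u, u ∈ X → u ≠ 0 → dX ≤ leeWt u := by
      intro u hu hne
      have : minLee (X : Set (Vec α β)) ≤ leeWt u :=
        Nat.sInf_le ⟨u, ⟨hu, by simpa⟩, rfl⟩
      rwa [hdX] at this
    have hlbY : ∀ v, v ∈ Y → v ≠ 0 → dY ≤ leeWt v := by
      intro v hv hne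
      have : minLee (Y : Set (Vec α β)) ≤ leeWt v :=
        Nat.sInf_le ⟨v, ⟨hv, by simpa⟩, rfl⟩
      rwa [hdY] at this
    rw [hmin]
    have hmemX : plVec u1 0 ∈ P \ {0} := by
      refine ⟨⟨u1, hu1X, 0, Y.zero_mem, rfl⟩, ?_⟩
      simp only [Set.mem_singleton_iff]
      intro h0
      exact hu1ne (plVec_inj (h0.trans plVec_zero.symm)).1
    have hmemY : plVec 0 v1 ∈ P \ {0} := by
      refine ⟨⟨0, X.zero_mem, v1, hv1Y, rfl⟩, ?_⟩
      simp only [Set.mem_singleton_iff]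
      intro h0
      exact hv1ne (plVec_inj (h0.trans plVec_zero.symm)).2
    have hwX : leeWt (plVec u1 0) = 2 * dX := by
      rw [leeWt_plVec, add_zero, hu1w]; ring
    have hwY : leeWt (plVec 0 v1) = dY := by
      rw [leeWt_plVec, leeWt_zero, zero_add, zero_add, hv1w]
    apply le_antisymm
    · exact le_min (Nat.sInf_le ⟨_, hmemX, hwX⟩) (Nat.sInf_le ⟨_, hmemY, hwY⟩)
    · refine le_csInf ⟨2 * dX, _, hmemX, hwX⟩ ?_
      rintro d ⟨w, ⟨hwP, hw0⟩, rfl⟩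
      simp only [Set.mem_singleton_iff] at hw0
      obtain ⟨u, hu, v, hv, rfl⟩ := hwP
      rw [leeWt_plVec]
      by_cases hv0 : v = 0
      · subst hv0
        have hu0 : u ≠ 0 := fun h => hw0 (by rw [h]; exact plVec_zero)
        have h1 := hlbX u hu hu0
        have : min (2 * dX) dY ≤ 2 * dX := min_le_left _ _
        rw [add_zero]
        omega
      · have h1 := hlbY v hv hv0
        have htri : leeWt v ≤ leeWt u + leeWt (u + v) := by
          have h2 := leeWt_add_le (-u) (u + v)
          rw [leeWt_neg] at h2
          simpa using h2
        have : min (2 * dX) dY ≤ dY := min_le_right _ _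
        omega
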